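/- Let R be a commutative ring and M an R-module. Then id_R(M) ≤ cd_R(M) + wdim(R), where cd_R(M) is the cotorsion dimension of M. -/

import Mathlib

open CategoryTheory Opposite

noncomputable section

universe u

variable (R : Type u) [CommRing R]

/-- `ExtVanish R M N n` : the `n`-th Ext group `Ext^n_R(M, N)` vanishes. -/
def ExtVanish (M N : ModuleCat.{u} R) (n : ℕ) : Prop :=
  Subsingleton (((Ext R (ModuleCat.{u} R) n).obj (op M)).obj N)

/-- `TorVanish R M N n` : the `n`-th Tor group `Tor_n^R(M, N)` vanishes. -/
def TorVanish (M N : ModuleCat.{u} R) (n : ℕ) : Prop :=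
  Subsingleton (((Tor (ModuleCat.{u} R) n).obj M).obj N)

/-- `pdLE R M n` : the projective dimension of `M` is at most `n`. -/
def pdLE (M : ModuleCat.{u} R) (n : ℕ) : Prop :=
  ∀ N : ModuleCat.{u} R, ExtVanish R M N (n + 1)

/-- `idLE R M n` : the injective dimension of `M` is at most `n`. -/
def idLE (M : ModuleCat.{u} R) (n : ℕ) : Prop :=
  ∀ N : ModuleCat.{u} R, ExtVanish R N M (n + 1)

/-- `fdLE R M n` : the flat dimension of `M` is at most `n`. -/
def fdLE (M : ModuleCat.{u} R) (n : ℕ) : Prop :=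
  ∀ N : ModuleCat.{u} R, TorVanish R M N (n + 1)

/-- `cdLE R M n` : the cotorsion dimension of `M` is at most `n`, i.e.
`Ext^{n+1}_R(F, M) = 0` for every flat `R`-module `F`. -/
def cdLE (M : ModuleCat.{u} R) (n : ℕ) : Prop :=
  ∀ F : ModuleCat.{u} R, Module.Flat R F → ExtVanish R F M (n + 1)

/-- The projective dimension of a module, as an element of `ℕ∞`. -/
def pd (M : ModuleCat.{u} R) : ℕ∞ := sInf ((↑) '' {n : ℕ | pdLE R M n})

/-- The injective dimension of a module, as an element of `ℕ∞`. -/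
def injd (M : ModuleCat.{u} R) : ℕ∞ := sInf ((↑) '' {n : ℕ | idLE R M n})

/-- The flat dimension of a module, as an element of `ℕ∞`. -/
def fd (M : ModuleCat.{u} R) : ℕ∞ := sInf ((↑) '' {n : ℕ | fdLE R M n})

/-- The cotorsion dimension of a module, as an element of `ℕ∞`. -/
def cd (M : ModuleCat.{u} R) : ℕ∞ := sInf ((↑) '' {n : ℕ | cdLE R M n})

/-- The global dimension of a ring. -/
def gldim : ℕ∞ := ⨆ M : ModuleCat.{u} R, pd R M

/-- The weak global dimension of a ring. -/
def wdim : ℕ∞ := ⨆ M : ModuleCat.{u} R, fd R M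

/-- The global cotorsion dimension of a ring: the supremum of the projective
dimensions of all flat modules. -/
def cotD : ℕ∞ := ⨆ (M : ModuleCat.{u} R) (_ : Module.Flat R M), pd R M

/-- The finitistic projective dimension of a ring. -/
def FPD : ℕ∞ := sSup {d : ℕ∞ | d ≠ ⊤ ∧ ∃ M : ModuleCat.{u} R, pd R M = d}

/-- The finitistic flat dimension of a ring. -/
def FFD : ℕ∞ := sSup {d : ℕ∞ | d ≠ ⊤ ∧ ∃ M : ModuleCat.{u} R, fd R M = d}

/-- The finitistic injective dimension of a ring. -/
def FID : ℕ∞ := sSup {d : ℕ∞ | d ≠ ⊤ ∧ ∃ M : ModuleCat.{u} R, injd R M = d}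

/-- The finitistic cotorsion dimension of a ring. -/
def FCD : ℕ∞ := sSup {d : ℕ∞ | d ≠ ⊤ ∧ ∃ M : ModuleCat.{u} R, cd R M = d}

/-- `R` is `n`-perfect if every flat `R`-module has projective dimension at most `n`. -/
def IsNPerfect (n : ℕ) : Prop :=
  ∀ M : ModuleCat.{u} R, Module.Flat R M → pd R M ≤ n

end




noncomputable section AuxAll

open CategoryTheory Opposite Limits

namespace ProofAux

variable {C : Type*} [Category C] [Abelian C]

/-- Truncation of a chain complex. -/
def trunc (Y : ChainComplex C ℕ) (w : ℕ) : ChainComplex C ℕ where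
  X i := Y.X (w + i)
  d i j := Y.d (w + i) (w + j)
  shape i j h := Y.shape _ _ (fun hh => h (by simp only [ComplexShape.down_Rel] at hh ⊢; omega))
  d_comp_d' i j k _ _ := Y.d_comp_d _ _ _

lemma trunc_exactAt (Y : ChainComplex C ℕ) (w n : ℕ) (h : Y.ExactAt (w + n + 1)) :
    (trunc Y w).ExactAt (n + 1) := by
  rw [HomologicalComplex.exactAt_iff' _ (n + 2) (n + 1) n (by simp only [ChainComplex.prev]; omega)
    (by simp)]
  rw [HomologicalComplex.exactAt_iff' _ (w + n + 2) (w + n + 1) (w + n)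
    (by simp only [ChainComplex.prev]; omega) (by simp)] at h
  exact h

variable {N : C} (P : ProjectiveResolution N) (w : ℕ)

/-- The `w`-th syzygy. -/
abbrev syz : C := cokernel (P.complex.d (w + 1) w)

/-- The truncated resolution, a projective resolution of the syzygy. -/
def truncResolution : ProjectiveResolution (syz P w) where
  complex := trunc P.complex w
  projective n := P.projective (w + n)
  π := (ChainComplex.toSingle₀Equiv _ _).symm
    ⟨cokernel.π (P.complex.d (w + 1) w), cokernel.condition _⟩
  quasiIso := ⟨fun n => by
    cases n with
    | zero =>
      rw [ChainComplex.quasiIsoAt₀_iff, ShortComplex.quasiIso_iff_of_zeros' _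
        ((trunc P.complex w).shape 0 0 (by simp only [ComplexShape.down_Rel]; omega)) rfl rfl]
      have E : (ShortComplex.mk ((trunc P.complex w).d 1 0)
          (cokernel.π (P.complex.d (w + 1) w)) (cokernel.condition _)).Exact :=
        ShortComplex.exact_of_g_is_cokernel _ (cokernelIsCokernel _)
      refine (ShortComplex.exact_and_epi_g_iff_of_iso
        (S₁ := ShortComplex.mk ((trunc P.complex w).d 1 0)
          (cokernel.π (P.complex.d (w + 1) w)) (cokernel.condition _)) ?_).1
        ⟨E, coequalizer.π_epi⟩
      exact ShortComplex.isoMk (Iso.refl _) (Iso.refl _) (Iso.refl _) (by exact (Category.id_comp _).trans (Category.comp_id _).symm)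
        (by exact (Category.id_comp _).trans ((ChainComplex.toSingle₀Equiv_symm_apply_f_zero _ _).trans (Category.comp_id _).symm))
    | succ n =>
      rw [quasiIsoAt_iff_exactAt' _ _ (ChainComplex.exactAt_succ_single_obj _ _)]
      exact trunc_exactAt _ _ _ (P.complex_exactAt_succ (w + n))⟩

variable {D : Type*} [Category D] [Abelian D]

/-- Homology of the truncation. -/
def homologyTruncIso (Z : ChainComplex D ℕ) (w n : ℕ) :
    (trunc Z w).homology (n + 1) ≅ Z.homology (w + n + 1) :=
  (HomologicalComplex.homologyIsoSc' _ (n + 2) (n + 1) n (by simp only [ChainComplex.prev]; omega)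
      (by simp)) ≪≫
    (HomologicalComplex.homologyIsoSc' Z (w + n + 2) (w + n + 1) (w + n)
      (by simp only [ChainComplex.prev]; omega) (by simp)).symm

/-- Dimension shifting. -/
def shiftIso [HasProjectiveResolutions C] (G : C ⥤ D) [G.Additive] (n : ℕ) :
    (G.leftDerived (w + n + 1)).obj N ≅ (G.leftDerived (n + 1)).obj (syz P w) :=
  P.isoLeftDerivedObj G (w + n + 1) ≪≫
    (homologyTruncIso ((G.mapHomologicalComplex _).obj P.complex) w n).symm ≪≫
    ((truncResolution P w).isoLeftDerivedObj G (n + 1)).symm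

end ProofAux

open Function LinearMap TensorProduct

universe u

/-- If `0 → T → Q → K → 0` with `Q` flat and `X ⊗ T → X ⊗ Q` injective for all `X`,
then `K` is flat. -/
theorem flat_of_lTensor_injective {R : Type u} [CommRing R]
    {T Q K : Type u} [AddCommGroup T] [AddCommGroup Q] [AddCommGroup K]
    [Module R T] [Module R Q] [Module R K]
    (ι : T →ₗ[R] Q) (p : Q →ₗ[R] K) [Module.Flat R Q]
    (hp : Surjective p) (hexact : Exact ι p)
    (Hinj : ∀ (X : Type u) [AddCommGroup X] [Module R X], Injective (lTensor X ι)) :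
    Module.Flat R K := by
  rw [Module.Flat.iff_rTensor_preserves_injective_linearMap]
  intro A B _ _ _ _ f hf
  rw [injective_iff_map_eq_zero]
  intro t ht
  obtain ⟨q, rfl⟩ := LinearMap.lTensor_surjective A hp t
  have hcomm1 : lTensor B p (rTensor Q f q) = rTensor K f (lTensor A p q) := by
    rw [← LinearMap.comp_apply, lTensor_comp_rTensor, ← rTensor_comp_lTensor,
      LinearMap.comp_apply]
  rw [ht] at hcomm1
  have exactB : Exact (lTensor B ι) (lTensor B p) := lTensor_exact B hexact hp
  obtain ⟨s, hs⟩ := (exactB (rTensor Q f q)).mp hcomm1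
  set Cm := B ⧸ LinearMap.range f with hCm
  set g : B →ₗ[R] Cm := (LinearMap.range f).mkQ with hg
  have hgf : Exact f g := LinearMap.exact_map_mkQ_range f
  have hgsurj : Surjective g := Submodule.mkQ_surjective _
  have h2 : lTensor Cm ι (rTensor T g s) = 0 := by
    rw [← LinearMap.comp_apply, lTensor_comp_rTensor, ← rTensor_comp_lTensor,
      LinearMap.comp_apply, hs, ← LinearMap.comp_apply, ← rTensor_comp]
    have : g ∘ₗ f = 0 := by
      ext x
      exact (Submodule.Quotient.mk_eq_zero _).mpr (LinearMap.mem_range_self f x)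
    rw [this]
    simp
  have hsz : rTensor T g s = 0 := by
    have := Hinj Cm
    rw [injective_iff_map_eq_zero] at this
    exact this _ h2
  have exactT : Exact (rTensor T f) (rTensor T g) := rTensor_exact T hgf hgsurj
  obtain ⟨u, hu⟩ := (exactT s).mp hsz
  have h3 : rTensor Q f (lTensor A ι u) = rTensor Q f q := by
    rw [← LinearMap.comp_apply, rTensor_comp_lTensor, ← lTensor_comp_rTensor,
      LinearMap.comp_apply, hu, hs]
  have hQ : Injective (rTensor Q f) := Module.Flat.rTensor_preserves_injective_linearMap f hf
  have hq : q = lTensor A ι u := (hQ h3).symm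
  rw [hq, ← LinearMap.comp_apply, ← lTensor_comp]
  have : p ∘ₗ ι = 0 := by
    ext x
    exact hexact.apply_apply_eq_zero x
  rw [this]
  simp

section AuxC

open CategoryTheory Limits ProofAux Function LinearMap

universe u'

variable {R' : Type u'} [CommRing R']

lemma subsingleton_of_iso {A B : ModuleCat.{u'} R'} (e : A ≅ B) (h : Subsingleton A) :
    Subsingleton B :=
  @Equiv.subsingleton _ _ (((forget (ModuleCat R')).mapIso e).toEquiv.symm) h

lemma tensorLeft_map_eq (X : ModuleCat.{u'} R') {A B : ModuleCat.{u'} R'} (f : A ⟶ B) :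
    ((MonoidalCategory.tensorLeft X).map f).hom = LinearMap.lTensor X f.hom := rfl

/-- From vanishing of the `(w+1)`-st left derived tensor functor, the `w`-th syzygy is flat. -/
theorem syz_flat {N : ModuleCat.{u'} R'} (P : ProjectiveResolution N) (w : ℕ)
    (hTor : ∀ X : ModuleCat.{u'} R',
      Subsingleton (((MonoidalCategory.tensorLeft X).leftDerived (w + 1)).obj N)) :
    Module.Flat R' (syz (C := ModuleCat.{u'} R') P w) := by
  set Y := P.complex with hY
  set T : ModuleCat.{u'} R' := cokernel (Y.d (w + 2) (w + 1)) with hT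
  set π' : Y.X (w + 1) ⟶ T := cokernel.π _ with hπ'
  set ι : T ⟶ Y.X w := cokernel.desc _ (Y.d (w + 1) w) (Y.d_comp_d _ _ _) with hι
  set p : Y.X w ⟶ syz (C := ModuleCat.{u'} R') P w := cokernel.π (Y.d (w + 1) w) with hp
  have hπ'surj : Surjective π' := by
    rw [← ModuleCat.epi_iff_surjective]
    infer_instance
  have hpsurj : Surjective p := by
    rw [← ModuleCat.epi_iff_surjective]
    infer_instance
  have hcomp : ι.hom ∘ₗ π'.hom = (Y.d (w + 1) w).hom := by
    exact congrArg ModuleCat.Hom.hom (cokernel.π_desc (Y.d (w + 2) (w + 1)) (Y.d (w + 1) w) (Y.d_comp_d _ _ _))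
  have hrange : LinearMap.range ι.hom =
      LinearMap.range (Y.d (w + 1) w).hom := by
    rw [← hcomp, LinearMap.range_comp_of_range_eq_top]
    rwa [LinearMap.range_eq_top]
  have hexact0 : Function.Exact (Y.d (w + 1) w).hom
      p.hom := by
    rw [LinearMap.exact_iff]
    have := (ShortComplex.moduleCat_exact_iff_range_eq_ker
      (ShortComplex.mk (Y.d (w + 1) w) p (cokernel.condition _))).1
      (ShortComplex.exact_of_g_is_cokernel _ (cokernelIsCokernel _))
    exact this.symm
  have hexact : Function.Exact ι.hom p.hom := by
    rw [LinearMap.exact_iff, hrange]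
    rw [LinearMap.exact_iff] at hexact0
    exact hexact0
  have hcokexact : Function.Exact (Y.d (w + 2) (w + 1)).hom
      π'.hom := by
    rw [LinearMap.exact_iff]
    exact ((ShortComplex.moduleCat_exact_iff_range_eq_ker
      (ShortComplex.mk (Y.d (w + 2) (w + 1)) π' (cokernel.condition _))).1
      (ShortComplex.exact_of_g_is_cokernel _ (cokernelIsCokernel _))).symm
  have Hinj : ∀ (X : Type u') [AddCommGroup X] [Module R' X],
      Injective (LinearMap.lTensor X ι.hom) := by
    intro X _ _
    set Xc := ModuleCat.of R' X with hXc
    -- the homology of the tensored complex vanishes in degree `w+1`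
    have h1 : Subsingleton
        ((((MonoidalCategory.tensorLeft Xc).mapHomologicalComplex _).obj Y).homology (w + 1)) :=
      subsingleton_of_iso (P.isoLeftDerivedObj (MonoidalCategory.tensorLeft Xc) (w + 1)) (hTor Xc)
    have h2 : (((MonoidalCategory.tensorLeft Xc).mapHomologicalComplex
        (ComplexShape.down ℕ)).obj Y).ExactAt (w + 1) := by
      rw [HomologicalComplex.exactAt_iff_isZero_homology]
      exact ModuleCat.isZero_of_subsingleton _
    rw [HomologicalComplex.exactAt_iff' _ (w + 2) (w + 1) w
      (by simp only [ChainComplex.prev]; omega) (by simp)] at h2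
    have h3 : Function.Exact
        (LinearMap.lTensor X (Y.d (w + 2) (w + 1)).hom)
        (LinearMap.lTensor X (Y.d (w + 1) w).hom) := by
      rw [LinearMap.exact_iff]
      have := (ShortComplex.moduleCat_exact_iff_range_eq_ker _).1 h2
      exact this.symm
    -- right exactness of the tensor product
    have h4 : Function.Exact (LinearMap.lTensor X (Y.d (w + 2) (w+1)).hom)
        (LinearMap.lTensor X π'.hom) :=
      lTensor_exact X hcokexact hπ'surj
    have h5 : Surjective (LinearMap.lTensor X π'.hom) :=
      LinearMap.lTensor_surjective X hπ'surj
    rw [injective_iff_map_eq_zero]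
    intro a ha
    obtain ⟨b, rfl⟩ := h5 a
    have hb : LinearMap.lTensor X (Y.d (w + 1) w).hom b = 0 := by
      rw [← hcomp, LinearMap.lTensor_comp, LinearMap.comp_apply]
      exact ha
    obtain ⟨c, hc⟩ := (h3 b).mp hb
    rw [← hc, ← LinearMap.comp_apply, ← LinearMap.lTensor_comp]
    have hzero : π'.hom ∘ₗ (Y.d (w + 2) (w+1)).hom
        = 0 := by exact congrArg ModuleCat.Hom.hom (cokernel.condition (Y.d (w + 2) (w + 1)))
    rw [hzero]
    simp
  -- flatness of `Y.X w`
  haveI hprojQ : Module.Projective R' (Y.X w) := by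
    have : Projective (Y.X w) := P.projective w
    exact (IsProjective.iff_projective (Y.X w)).mpr this
  haveI hflatQ : Module.Flat R' (Y.X w) := inferInstance
  exact flat_of_lTensor_injective ι.hom p.hom
    hpsurj hexact Hinj

end AuxC

end AuxAll

open CategoryTheory Opposite Limits in
/-- `id_R(M) ≤ cd_R(M) + wdim R` for any module `M`. -/
theorem stmt_7 (R : Type u) [CommRing R] (M : ModuleCat.{u} R) :
    injd R M ≤ cd R M + wdim R := by
  by_cases hc : cd R M = ⊤
  · rw [hc, top_add]; exact le_top
  by_cases hw : wdim R = ⊤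
  · rw [hw, add_top]; exact le_top
  -- extract a natural number bound for the cotorsion dimension
  have hSne : ((↑· : ℕ → ℕ∞) '' {n : ℕ | cdLE R M n}).Nonempty := by
    by_contra h
    rw [Set.not_nonempty_iff_eq_empty] at h
    exact hc (by rw [show cd R M = sInf ((↑· : ℕ → ℕ∞) '' {n : ℕ | cdLE R M n}) from rfl, h,
      sInf_empty])
  obtain ⟨c, hc1, hc2⟩ := csInf_mem hSne
  replace hc1 : cdLE R M c := hc1
  have hc2' : ((c : ℕ) : ℕ∞) = cd R M := hc2
  obtain ⟨w, hw'⟩ : ∃ w : ℕ, wdim R = ((w : ℕ) : ℕ∞) := by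
    obtain ⟨w, hw'⟩ := WithTop.ne_top_iff_exists.1 hw
    exact ⟨w, by exact_mod_cast hw'.symm⟩
  -- Tor vanishing in degree `w+1` for every first argument
  have hTorAll : ∀ (X N : ModuleCat.{u} R), TorVanish R X N (w + 1) := by
    intro X N
    have h1 : fd R X ≤ ((w : ℕ) : ℕ∞) := by
      rw [← hw']
      exact le_iSup (fun M : ModuleCat.{u} R => fd R M) X
    have hfdne : ((↑· : ℕ → ℕ∞) '' {n : ℕ | fdLE R X n}).Nonempty := by
      by_contra h
      rw [Set.not_nonempty_iff_eq_empty] at h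
      have : fd R X = ⊤ := by
        rw [show fd R X = sInf ((↑· : ℕ → ℕ∞) '' {n : ℕ | fdLE R X n}) from rfl, h, sInf_empty]
      rw [this] at h1
      exact (lt_irrefl _ (lt_of_le_of_lt h1 (WithTop.coe_lt_top w))).elim
    obtain ⟨m, hm1, hm2⟩ := csInf_mem hfdne
    replace hm1 : fdLE R X m := hm1
    have hm2' : ((m : ℕ) : ℕ∞) = fd R X := hm2
    have hmw : m ≤ w := by
      have h : ((m : ℕ) : ℕ∞) ≤ ((w : ℕ) : ℕ∞) := hm2'.le.trans h1
      exact_mod_cast h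
    -- dimension shifting for Tor
    have P : ProjectiveResolution N := (HasProjectiveResolution.out (Z := N)).some
    have e := ProofAux.shiftIso P (w - m) (MonoidalCategory.tensorLeft X) m
    have hvan : TorVanish R X (ProofAux.syz (C := ModuleCat.{u} R) P (w - m)) (m + 1) := hm1 _
    have : Subsingleton (((MonoidalCategory.tensorLeft X).leftDerived
        ((w - m) + m + 1)).obj N) :=
      subsingleton_of_iso e.symm hvan
    rw [show w + 1 = (w - m) + m + 1 by omega]
    exact this
  -- the key bound on the injective dimension
  have key : idLE R M (c + w) := by
    intro N
    have P : ProjectiveResolution N := (HasProjectiveResolution.out (Z := N)).some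
    have hKflat : Module.Flat R (ProofAux.syz (C := ModuleCat.{u} R) P w) :=
      syz_flat P w (fun X => hTorAll X N)
    have hKext : ExtVanish R (ProofAux.syz (C := ModuleCat.{u} R) P w) M (c + 1) := hc1 _ hKflat
    have e := ProofAux.shiftIso P w
      (((linearYoneda R (ModuleCat.{u} R)).obj M).rightOp) c
    have hKext' : Subsingleton (((((linearYoneda R (ModuleCat.{u} R)).obj M).rightOp.leftDerived
        (c + 1)).obj (ProofAux.syz (C := ModuleCat.{u} R) P w)).unop) := hKext
    have : Subsingleton (((((linearYoneda R (ModuleCat.{u} R)).obj M).rightOp.leftDerived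
        (w + c + 1)).obj N).unop) :=
      subsingleton_of_iso e.unop hKext'
    rw [show c + w + 1 = w + c + 1 by omega]
    exact this
  have : injd R M ≤ ((c + w : ℕ) : ℕ∞) :=
    sInf_le ⟨c + w, key, rfl⟩
  refine le_trans this ?_
  rw [Nat.cast_add, hc2', ← hw']
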